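/- Fix b ∈ ℝ^n. Then min over u ∈ ℝ^n with ‖u‖₂ ≤ 1 of [½ Σ_{i,j=1}^n w_ij |u_i − u_j| − ⟨u, b⟩] equals the negative of the minimum over all matrices α ∈ ℝ^{n×n} with α_ij = −α_ji and |α_ij| ≤ 1 for all i,j of ‖Aα − b‖₂, where (Aα)_i = Σ_{j=1}^n w_ij α_ij. -/

import Mathlib

open Finset

lemma ipd_pair (n : ℕ) (W α : Fin n → Fin n → ℝ)
    (hsym : ∀ i j, W i j = W j i) (hanti : ∀ i j, α i j = - α j i) (u : Fin n → ℝ) :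
    ∑ i, ∑ j, W i j * α i j * (u i - u j) = 2 * ∑ i, u i * ∑ j, W i j * α i j := by
  have key : ∑ i, ∑ j, W i j * α i j * u j = - ∑ i, ∑ j, W i j * α i j * u i := by
    rw [Finset.sum_comm]
    have : ∀ j : Fin n, ∑ i, W i j * α i j * u j = ∑ i, -(W j i * α j i * u j) := by
      intro j
      refine Finset.sum_congr rfl fun i _ => ?_
      rw [hsym j i, hanti j i]; ring
    simp_rw [this, Finset.sum_neg_distrib]
  have expand : ∀ i : Fin n, ∑ j, W i j * α i j * (u i - u j)
      = (∑ j, W i j * α i j * u i) - ∑ j, W i j * α i j * u j := by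
    intro i
    rw [← Finset.sum_sub_distrib]
    exact Finset.sum_congr rfl fun j _ => by ring
  simp_rw [expand, Finset.sum_sub_distrib, key, Finset.mul_sum]
  rw [sub_neg_eq_add]
  have : ∀ i : Fin n, ∑ j, 2 * (u i * (W i j * α i j)) = ∑ j, W i j * α i j * u i + ∑ j, W i j * α i j * u i := by
    intro i; rw [← Finset.sum_add_distrib]; exact Finset.sum_congr rfl fun j _ => by ring
  simp_rw [this, Finset.sum_add_distrib]

lemma ipd_cs (n : ℕ) (u v : Fin n → ℝ) :
    -(Real.sqrt (∑ i, u i ^ 2) * Real.sqrt (∑ i, v i ^ 2)) ≤ ∑ i, u i * v i := by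
  have h := Finset.sum_mul_sq_le_sq_mul_sq Finset.univ u v
  have h2 : |∑ i, u i * v i| ≤ Real.sqrt (∑ i, u i ^ 2) * Real.sqrt (∑ i, v i ^ 2) := by
    rw [← Real.sqrt_sq_eq_abs, ← Real.sqrt_mul (by positivity)]
    exact Real.sqrt_le_sqrt h
  linarith [neg_abs_le (∑ i, u i * v i)]

theorem inner_problem_duality (n : ℕ) (hn : 2 ≤ n)
    (W : Fin n → Fin n → ℝ)
    (hsym : ∀ i j, W i j = W j i) (hnonneg : ∀ i j, 0 ≤ W i j)
    (b : Fin n → ℝ) :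
    sInf {r : ℝ | ∃ u : Fin n → ℝ, (∑ i, (u i) ^ 2) ≤ 1 ∧
        r = (1 / 2) * (∑ i, ∑ j, W i j * |u i - u j|) - ∑ i, u i * b i} =
      - sInf {r : ℝ | ∃ α : Fin n → Fin n → ℝ, (∀ i j, α i j = - α j i) ∧
        (∀ i j, |α i j| ≤ 1) ∧
        r = Real.sqrt (∑ i, ((∑ j, W i j * α i j) - b i) ^ 2)} := by
  classical
  set A : (Fin n → Fin n → ℝ) → Fin n → ℝ := fun α i => ∑ j, W i j * α i j with hA
  set g : (Fin n → Fin n → ℝ) → ℝ := fun α => Real.sqrt (∑ i, (A α i - b i) ^ 2) with hg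
  set K : Set (Fin n → Fin n → ℝ) :=
    {α | (∀ i j, α i j = - α j i) ∧ ∀ i j, |α i j| ≤ 1} with hK
  -- compactness of K
  have hKclosed : IsClosed K := by
    have : K = (⋂ i, ⋂ j, {α : Fin n → Fin n → ℝ | α i j = - α j i}) ∩
        (⋂ i, ⋂ j, {α : Fin n → Fin n → ℝ | |α i j| ≤ 1}) := by
      ext α; simp [hK, Set.mem_iInter]
    rw [this]
    have hcont : ∀ i j : Fin n, Continuous fun α : Fin n → Fin n → ℝ => α i j :=
      fun i j => (continuous_apply j).comp (continuous_apply i)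
    apply IsClosed.inter
    · exact isClosed_iInter fun i => isClosed_iInter fun j =>
        isClosed_eq (hcont i j) (hcont j i).neg
    · exact isClosed_iInter fun i => isClosed_iInter fun j =>
        isClosed_le ((hcont i j).abs) continuous_const
  have hKcompact : IsCompact K := by
    have hbig : IsCompact (Set.univ.pi fun _ : Fin n =>
        (Set.univ.pi fun _ : Fin n => Set.Icc (-1 : ℝ) 1)) :=
      isCompact_univ_pi fun _ => isCompact_univ_pi fun _ => isCompact_Icc
    refine hbig.of_isClosed_subset hKclosed ?_
    intro α hα
    simp only [Set.mem_pi, Set.mem_univ, forall_true_left, Set.mem_Icc]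
    intro i j
    exact abs_le.mp (hα.2 i j)
  have h0K : (fun _ _ => (0:ℝ)) ∈ K := ⟨fun i j => by simp, fun i j => by simp⟩
  have hgcont : Continuous g := by
    apply Real.continuous_sqrt.comp
    apply continuous_finset_sum
    intro i _
    apply Continuous.pow
    apply Continuous.sub _ continuous_const
    exact continuous_finset_sum _ fun j _ =>
      continuous_const.mul ((continuous_apply j).comp (continuous_apply i))
  obtain ⟨αs, hαsK, hmin⟩ := hKcompact.exists_isMinOn ⟨_, h0K⟩ hgcont.continuousOn
  have hmin' : ∀ α ∈ K, g αs ≤ g α := fun α hα => hmin hα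
  set S2 : Set ℝ := {r : ℝ | ∃ α : Fin n → Fin n → ℝ, (∀ i j, α i j = - α j i) ∧
        (∀ i j, |α i j| ≤ 1) ∧
        r = Real.sqrt (∑ i, ((∑ j, W i j * α i j) - b i) ^ 2)} with hS2
  have hS2mem : g αs ∈ S2 := ⟨αs, hαsK.1, hαsK.2, rfl⟩
  have hS2eq : sInf S2 = g αs := by
    apply le_antisymm
    · apply csInf_le _ hS2mem
      exact ⟨0, by rintro r ⟨α, _, _, rfl⟩; positivity⟩
    · apply le_csInf ⟨_, hS2mem⟩
      rintro r ⟨α, h1, h2, rfl⟩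
      exact hmin' α ⟨h1, h2⟩
  set v : Fin n → ℝ := fun i => A αs i - b i with hv
  -- optimality condition
  have hopt : ∀ α ∈ K, 0 ≤ ∑ i, v i * (A α i - A αs i) := by
    intro α hα
    by_contra hc
    push_neg at hc
    set d : Fin n → ℝ := fun i => A α i - A αs i with hd
    set c : ℝ := ∑ i, v i * d i with hcdef
    set D : ℝ := ∑ i, d i ^ 2 with hD
    have hDnn : 0 ≤ D := by positivity
    have hineq : ∀ t : ℝ, 0 < t → t ≤ 1 → 0 ≤ 2 * t * c + t ^ 2 * D := by
      intro t ht0 ht1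
      set αt : Fin n → Fin n → ℝ := fun i j => αs i j + t * (α i j - αs i j) with hαt
      have hαtK : αt ∈ K := by
        constructor
        · intro i j
          have h1 := hαsK.1 i j; have h2 := hα.1 i j
          simp only [hαt]; rw [h1, h2]; ring
        · intro i j
          have h1 := hαsK.2 i j; have h2 := hα.2 i j
          calc |αs i j + t * (α i j - αs i j)|
              = |(1 - t) * αs i j + t * α i j| := by ring_nf
            _ ≤ |(1 - t) * αs i j| + |t * α i j| := abs_add_le _ _
            _ = (1 - t) * |αs i j| + t * |α i j| := by
                rw [abs_mul, abs_mul, abs_of_nonneg (by linarith), abs_of_nonneg ht0.le]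
            _ ≤ (1 - t) * 1 + t * 1 := by
                apply add_le_add
                · exact mul_le_mul_of_nonneg_left h1 (by linarith)
                · exact mul_le_mul_of_nonneg_left h2 ht0.le
            _ = 1 := by ring
      have hAαt : ∀ i, A αt i = A αs i + t * d i := by
        intro i
        simp only [hA, hαt, hd]
        have h1 : ∑ x, W i x * (αs i x + t * (α i x - αs i x))
            = ∑ x, (W i x * αs i x + (t * (W i x * α i x) - t * (W i x * αs i x))) :=
          Finset.sum_congr rfl fun x _ => by ring
        rw [h1, Finset.sum_add_distrib, Finset.sum_sub_distrib, ← Finset.mul_sum,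
          ← Finset.mul_sum]
        ring
      have hle := hmin' αt hαtK
      have hsq : ∑ i, (A αs i - b i) ^ 2 ≤ ∑ i, (A αt i - b i) ^ 2 := by
        have h2 := Real.sqrt_le_sqrt_iff (x := ∑ i, (A αs i - b i) ^ 2)
          (y := ∑ i, (A αt i - b i) ^ 2) (by positivity)
        exact h2.mp hle
      have hexpand : ∑ i, (A αt i - b i) ^ 2
          = ∑ i, (A αs i - b i) ^ 2 + 2 * t * c + t ^ 2 * D := by
        have h1 : ∀ i : Fin n, (A αt i - b i) ^ 2
            = (A αs i - b i) ^ 2 + 2 * t * ((A αs i - b i) * d i) + t ^ 2 * d i ^ 2 := by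
          intro i; rw [hAαt i]; ring
        have hc' : c = ∑ i, (A αs i - b i) * d i := hcdef
        calc ∑ i, (A αt i - b i) ^ 2
            = ∑ i, ((A αs i - b i) ^ 2 + 2 * t * ((A αs i - b i) * d i) + t ^ 2 * d i ^ 2) :=
              Finset.sum_congr rfl fun i _ => h1 i
          _ = ∑ i, (A αs i - b i) ^ 2 + 2 * t * (∑ i, (A αs i - b i) * d i)
              + t ^ 2 * ∑ i, d i ^ 2 := by
              rw [Finset.mul_sum, Finset.mul_sum, ← Finset.sum_add_distrib,
                ← Finset.sum_add_distrib]
          _ = _ := by rw [← hc', ← hD]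
      rw [hexpand] at hsq
      linarith
    rcases eq_or_lt_of_le hDnn with hD0 | hDpos
    · have := hineq 1 one_pos le_rfl
      rw [← hD0] at this
      linarith
    · set t : ℝ := min 1 (-c / D) with ht
      have ht0 : 0 < t := lt_min one_pos (div_pos (by linarith) hDpos)
      have ht1 : t ≤ 1 := min_le_left _ _
      have htD : t * D ≤ -c := by
        have : t ≤ -c / D := min_le_right _ _
        exact (le_div_iff₀ hDpos).mp this
      have := hineq t ht0 ht1
      nlinarith [mul_pos ht0 ht0, mul_le_mul_of_nonneg_left htD ht0.le]
  -- termwise equality from the sign test matrix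
  set αsg : Fin n → Fin n → ℝ := fun i j => - Real.sign (v i - v j) with hαsg
  have hsign_abs : ∀ x : ℝ, x * Real.sign x = |x| := by
    intro x
    rcases lt_trichotomy x 0 with h | h | h
    · rw [Real.sign_of_neg h, abs_of_neg h]; ring
    · simp [h]
    · rw [Real.sign_of_pos h, abs_of_pos h]; ring
  have hαsgK : αsg ∈ K := by
    constructor
    · intro i j
      simp only [hαsg]
      rw [show v j - v i = -(v i - v j) by ring, Real.sign_neg]
      ring
    · intro i j
      simp only [hαsg, abs_neg]
      rcases lt_trichotomy (v i - v j) 0 with h | h | h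
      · rw [Real.sign_of_neg h]; norm_num
      · simp [h]
      · rw [Real.sign_of_pos h]; norm_num
  have hterm : ∀ i j, W i j * αs i j * (v i - v j) = -(W i j * |v i - v j|) := by
    have hopt' := hopt αsg hαsgK
    have hpair1 := ipd_pair n W αsg hsym hαsgK.1 v
    have hpair2 := ipd_pair n W αs hsym hαsK.1 v
    -- ⟨v, A α⟩ = ½ ΣΣ ...
    have hvA : ∀ α : Fin n → Fin n → ℝ, ∑ i, v i * A α i = ∑ i, v i * ∑ j, W i j * α i j :=
      fun α => rfl
    have hsum_le : ∑ i, ∑ j, W i j * αs i j * (v i - v j)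
        ≤ ∑ i, ∑ j, W i j * αsg i j * (v i - v j) := by
      rw [hpair1, hpair2]
      have : ∑ i, v i * A αsg i - ∑ i, v i * A αs i = ∑ i, v i * (A αsg i - A αs i) := by
        rw [← Finset.sum_sub_distrib]
        exact Finset.sum_congr rfl fun i _ => by ring
      nlinarith [hopt']
    have hsg_val : ∀ i j, W i j * αsg i j * (v i - v j) = -(W i j * |v i - v j|) := by
      intro i j
      simp only [hαsg]
      rw [show W i j * -Real.sign (v i - v j) * (v i - v j)
          = -(W i j * ((v i - v j) * Real.sign (v i - v j))) by ring, hsign_abs]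
    have hge : ∀ i j, -(W i j * |v i - v j|) ≤ W i j * αs i j * (v i - v j) := by
      intro i j
      have h1 : -|v i - v j| ≤ αs i j * (v i - v j) := by
        have h2 : |αs i j * (v i - v j)| ≤ |v i - v j| := by
          rw [abs_mul]
          calc |αs i j| * |v i - v j| ≤ 1 * |v i - v j| :=
              mul_le_mul_of_nonneg_right (hαsK.2 i j) (abs_nonneg _)
            _ = _ := one_mul _
        linarith [neg_abs_le (αs i j * (v i - v j))]
      calc -(W i j * |v i - v j|) = W i j * -|v i - v j| := by ring
        _ ≤ W i j * (αs i j * (v i - v j)) := mul_le_mul_of_nonneg_left h1 (hnonneg i j)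
        _ = W i j * αs i j * (v i - v j) := by ring
    -- sum of nonneg terms equals 0
    have hzero : ∑ i, ∑ j, (W i j * αs i j * (v i - v j) + W i j * |v i - v j|) = 0 := by
      have hle2 : ∑ i, ∑ j, (W i j * αs i j * (v i - v j) + W i j * |v i - v j|) ≤ 0 := by
        have : ∑ i, ∑ j, (W i j * αs i j * (v i - v j) + W i j * |v i - v j|)
            = ∑ i, ∑ j, W i j * αs i j * (v i - v j) - ∑ i, ∑ j, (-(W i j * |v i - v j|)) := by
          rw [← Finset.sum_sub_distrib]
          refine Finset.sum_congr rfl fun i _ => ?_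
          rw [← Finset.sum_sub_distrib]
          exact Finset.sum_congr rfl fun j _ => by ring
        rw [this]
        have : ∑ i, ∑ j, (-(W i j * |v i - v j|)) = ∑ i, ∑ j, W i j * αsg i j * (v i - v j) := by
          refine Finset.sum_congr rfl fun i _ => Finset.sum_congr rfl fun j _ => (hsg_val i j).symm
        rw [this]
        linarith [hsum_le]
      have hge2 : 0 ≤ ∑ i, ∑ j, (W i j * αs i j * (v i - v j) + W i j * |v i - v j|) := by
        apply Finset.sum_nonneg; intro i _
        apply Finset.sum_nonneg; intro j _
        linarith [hge i j]
      linarith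
    intro i j
    have h1 : ∀ i ∈ Finset.univ (α := Fin n),
        0 ≤ ∑ j, (W i j * αs i j * (v i - v j) + W i j * |v i - v j|) := by
      intro i _
      apply Finset.sum_nonneg; intro j _; linarith [hge i j]
    have h2 := (Finset.sum_eq_zero_iff_of_nonneg h1).mp hzero i (Finset.mem_univ i)
    have h3 : ∀ j ∈ Finset.univ (α := Fin n),
        0 ≤ W i j * αs i j * (v i - v j) + W i j * |v i - v j| := by
      intro j _; linarith [hge i j]
    have h4 := (Finset.sum_eq_zero_iff_of_nonneg h3).mp h2 j (Finset.mem_univ j)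
    linarith [h4]
  -- weak duality: every element of S1 is ≥ -g αs
  set S1 : Set ℝ := {r : ℝ | ∃ u : Fin n → ℝ, (∑ i, (u i) ^ 2) ≤ 1 ∧
      r = (1 / 2) * (∑ i, ∑ j, W i j * |u i - u j|) - ∑ i, u i * b i} with hS1
  have hlb : ∀ r ∈ S1, -(g αs) ≤ r := by
    rintro r ⟨u, hu, rfl⟩
    have hpair := ipd_pair n W αs hsym hαsK.1 u
    have h1 : ∑ i, ∑ j, W i j * αs i j * (u i - u j) ≤ ∑ i, ∑ j, W i j * |u i - u j| := by
      apply Finset.sum_le_sum; intro i _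
      apply Finset.sum_le_sum; intro j _
      have h2 : αs i j * (u i - u j) ≤ |u i - u j| := by
        calc αs i j * (u i - u j) ≤ |αs i j * (u i - u j)| := le_abs_self _
          _ = |αs i j| * |u i - u j| := abs_mul _ _
          _ ≤ 1 * |u i - u j| := mul_le_mul_of_nonneg_right (hαsK.2 i j) (abs_nonneg _)
          _ = |u i - u j| := one_mul _
      calc W i j * αs i j * (u i - u j) = W i j * (αs i j * (u i - u j)) := by ring
        _ ≤ W i j * |u i - u j| := mul_le_mul_of_nonneg_left h2 (hnonneg i j)
    have h2 : ∑ i, u i * v i ≤ (1/2) * (∑ i, ∑ j, W i j * |u i - u j|) - ∑ i, u i * b i := by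
      have : ∑ i, u i * v i = ∑ i, u i * A αs i - ∑ i, u i * b i := by
        rw [← Finset.sum_sub_distrib]
        exact Finset.sum_congr rfl fun i _ => by simp only [hv]; ring
      rw [this]
      have : ∑ i, u i * A αs i = (1/2) * ∑ i, ∑ j, W i j * αs i j * (u i - u j) := by
        rw [hpair]; ring
      rw [this]
      linarith
    have h3 : -(Real.sqrt (∑ i, u i ^ 2) * Real.sqrt (∑ i, v i ^ 2)) ≤ ∑ i, u i * v i :=
      ipd_cs n u v
    have h4 : Real.sqrt (∑ i, u i ^ 2) ≤ 1 := by
      rw [show (1:ℝ) = Real.sqrt 1 by simp]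
      exact Real.sqrt_le_sqrt hu
    have h5 : -(g αs) ≤ -(Real.sqrt (∑ i, u i ^ 2) * Real.sqrt (∑ i, v i ^ 2)) := by
      have hgv : g αs = Real.sqrt (∑ i, v i ^ 2) := rfl
      rw [hgv]
      have := mul_le_mul_of_nonneg_right h4 (Real.sqrt_nonneg (∑ i, v i ^ 2))
      linarith
    linarith
  -- strong duality: -(g αs) ∈ S1
  have hmem : -(g αs) ∈ S1 := by
    rcases eq_or_lt_of_le (show (0:ℝ) ≤ ∑ i, v i ^ 2 by positivity) with hv0 | hvpos
    · refine ⟨fun _ => 0, by simp, ?_⟩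
      have : g αs = 0 := by
        simp only [hg]
        rw [show ∑ i, (A αs i - b i) ^ 2 = ∑ i, v i ^ 2 from rfl, ← hv0, Real.sqrt_zero]
      rw [this]
      simp
    · set N : ℝ := Real.sqrt (∑ i, v i ^ 2) with hN
      have hNpos : 0 < N := Real.sqrt_pos.mpr hvpos
      have hN2 : N ^ 2 = ∑ i, v i ^ 2 := Real.sq_sqrt (le_of_lt hvpos)
      refine ⟨fun i => -(v i) / N, ?_, ?_⟩
      · have : ∑ i, (-(v i) / N) ^ 2 = (∑ i, v i ^ 2) / N ^ 2 := by
          rw [Finset.sum_div]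
          exact Finset.sum_congr rfl fun i _ => by field_simp
        rw [this, ← hN2]
        rw [div_self (by positivity)]
      · have habs : ∀ i j : Fin n, |(-(v i) / N) - (-(v j) / N)| = |v i - v j| / N := by
          intro i j
          rw [show (-(v i) / N) - (-(v j) / N) = -(v i - v j) / N by ring, abs_div, abs_neg,
            abs_of_pos hNpos]
        have hsum1 : ∑ i, ∑ j, W i j * |(-(v i) / N) - (-(v j) / N)|
            = (∑ i, ∑ j, W i j * |v i - v j|) / N := by
          rw [Finset.sum_div]
          refine Finset.sum_congr rfl fun i _ => ?_
          rw [Finset.sum_div]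
          refine Finset.sum_congr rfl fun j _ => ?_
          rw [habs i j]; field_simp
        have hsum2 : ∑ i, (-(v i) / N) * b i = -(∑ i, v i * b i) / N := by
          calc ∑ i, (-(v i) / N) * b i = ∑ i, -(v i * b i) / N :=
              Finset.sum_congr rfl fun i _ => by ring
            _ = (∑ i, -(v i * b i)) / N := by rw [← Finset.sum_div]
            _ = -(∑ i, v i * b i) / N := by rw [Finset.sum_neg_distrib]
        show -g αs = 1 / 2 * (∑ i, ∑ j, W i j * |(-(v i) / N) - (-(v j) / N)|)
          - ∑ i, (-(v i) / N) * b i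
        rw [hsum1, hsum2]
        -- key: ΣΣ W |v i - v j| = -ΣΣ W αs (v i - v j) = -2 Σ v (A αs)
        have hWabs : ∑ i, ∑ j, W i j * |v i - v j|
            = -(2 * ∑ i, v i * A αs i) := by
          have h1 : ∑ i, ∑ j, W i j * |v i - v j|
              = -∑ i, ∑ j, W i j * αs i j * (v i - v j) := by
            rw [← Finset.sum_neg_distrib]
            refine Finset.sum_congr rfl fun i _ => ?_
            rw [← Finset.sum_neg_distrib]
            refine Finset.sum_congr rfl fun j _ => ?_
            have := hterm i j
            linarith
          rw [h1, ipd_pair n W αs hsym hαsK.1 v]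
        have hvv : ∑ i, v i * A αs i - ∑ i, v i * b i = ∑ i, v i ^ 2 := by
          rw [← Finset.sum_sub_distrib]
          exact Finset.sum_congr rfl fun i _ => by simp only [hv]; ring
        have hgN : g αs = N := rfl
        rw [hgN, hWabs]
        field_simp
        nlinarith [hN2, hvv]
  -- conclude
  have hS1inf : sInf S1 = -(g αs) :=
    le_antisymm (csInf_le ⟨-(g αs), hlb⟩ hmem) (le_csInf ⟨_, hmem⟩ hlb)
  rw [show sInf {r : ℝ | ∃ u : Fin n → ℝ, (∑ i, (u i) ^ 2) ≤ 1 ∧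
        r = (1 / 2) * (∑ i, ∑ j, W i j * |u i - u j|) - ∑ i, u i * b i} = sInf S1 from rfl,
    hS1inf, hS2eq]
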